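/- For all natural numbers n and k, the *_ψ product of *_ψ powers satisfies x^{n*_ψ} *_ψ x^{k*_ψ} = (n!/n_ψ!) x^{(n+k)*_ψ}; that is, ((n!/n_ψ!) X^n) *_ψ ((k!/k_ψ!) X^k) = (n!/n_ψ!)((n+k)!/(n+k)_ψ!) X^{n+k}. -/

import Mathlib

open Polynomial

lemma xpsi_pow_apply {F : Type*} [Field F] [CharZero F]
    (ψ : ℕ → F) (xψ : Module.End F (Polynomial F))
    (hx : ∀ n : ℕ, xψ (X ^ n) = (((n : F) + 1) / ψ (n + 1)) • X ^ (n + 1))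
    (n k : ℕ) :
    (xψ ^ n) (X ^ k) =
      (∏ j ∈ Finset.range n, ((k + j + 1 : F) / ψ (k + j + 1))) • X ^ (k + n) := by
  induction n with
  | zero => simp
  | succ n ih =>
      rw [pow_succ', Module.End.mul_apply, ih, map_smul, hx,
        Finset.prod_range_succ, smul_smul]
      congr 1
      push_cast
      ring

lemma scalar_identity {F : Type*} [Field F] [CharZero F]
    (ψ : ℕ → F) (hψ : ∀ n, 1 ≤ n → ψ n ≠ 0) (n k : ℕ) :
    ((k.factorial : F) / ∏ i ∈ Finset.range k, ψ (i + 1))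
        * ∏ j ∈ Finset.range n, ((k + j + 1 : F) / ψ (k + j + 1))
      = ((n + k).factorial : F) / ∏ i ∈ Finset.range (n + k), ψ (i + 1) := by
  have hprod : ∀ m : ℕ, (∏ i ∈ Finset.range m, ψ (i + 1)) ≠ 0 := by
    intro m
    exact Finset.prod_ne_zero_iff.2 fun i _ => hψ (i + 1) (Nat.le_add_left 1 i)
  induction n with
  | zero => simp
  | succ n ih =>
      rw [Finset.prod_range_succ, ← mul_assoc, ih]
      have h1 : (n + 1 + k) = (n + k) + 1 := by omega
      rw [h1, Nat.factorial_succ, Finset.prod_range_succ]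
      have h2 : ψ (n + k + 1) ≠ 0 := hψ _ (Nat.le_add_left 1 _)
      have h3 := hprod (n + k)
      have h4 : (k + n + 1 : F) = ((n + k : ℕ) : F) + 1 := by push_cast; ring
      rw [h4]
      have h5 : (k + n + 1) = (n + k + 1) := by omega
      rw [h5]
      field_simp
      push_cast
      ring

theorem psi_product_of_psi_powers {F : Type*} [Field F] [CharZero F]
    (ψ : ℕ → F) (hψ : ∀ n, 1 ≤ n → ψ n ≠ 0)
    (xψ : Module.End F (Polynomial F))
    (hx : ∀ n : ℕ, xψ (X ^ n) = (((n : F) + 1) / ψ (n + 1)) • X ^ (n + 1))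
    (n k : ℕ) :
    Polynomial.aeval (R := F) xψ
        (((n.factorial : F) / ∏ i ∈ Finset.range n, ψ (i + 1)) • X ^ n)
        (((k.factorial : F) / ∏ i ∈ Finset.range k, ψ (i + 1)) • X ^ k)
      = (((n.factorial : F) / ∏ i ∈ Finset.range n, ψ (i + 1))
          * (((n + k).factorial : F) / ∏ i ∈ Finset.range (n + k), ψ (i + 1)))
          • X ^ (n + k) := by
  have h : Polynomial.aeval (R := F) xψ
      (((n.factorial : F) / ∏ i ∈ Finset.range n, ψ (i + 1)) • X ^ n)
      = ((n.factorial : F) / ∏ i ∈ Finset.range n, ψ (i + 1)) • (xψ ^ n) := by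
    rw [map_smul, aeval_X_pow]
  rw [h, LinearMap.smul_apply, map_smul, xpsi_pow_apply ψ xψ hx n k]
  rw [smul_smul, smul_smul, mul_assoc, scalar_identity ψ hψ n k, Nat.add_comm k n]
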